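/- Let G be an s-t graph containing vertices a, b, c with b ∉ {s, t}, N(b) = {a, c}, and (a, c) ∈ E(G), and suppose every vertex and edge of G lies on some s-t path. Then G has a tracking set of size at most k if and only if the graph G − b has a tracking set of size at most k − 1; moreover every tracking set of G of minimum size among those containing b satisfies that (tracking set of G) minus {b} is a tracking set for G − b. -/

import Mathlib

/-- A tracking set for an s-t graph: any two distinct s-t paths yield different
sequences of vertices of `T`. -/
def IsTrackingSet {V : Type*} [DecidableEq V] (G : SimpleGraph V) (s t : V)
    (T : Finset V) : Prop :=
  ∀ p q : G.Path s t,
    p.1.support.filter (· ∈ T) = q.1.support.filter (· ∈ T) → p = q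

section TriangleRuleAux

open SimpleGraph List

set_option linter.unusedSectionVars false
set_option maxHeartbeats 1000000

lemma walk_support_inj {V : Type*} {G : SimpleGraph V} {u v : V} (p : G.Walk u v) :
    ∀ q : G.Walk u v, p.support = q.support → p = q := by
  induction p with
  | nil =>
    intro q hq
    cases q with
    | nil => rfl
    | cons h r =>
      rw [Walk.support_nil, Walk.support_cons] at hq
      exact absurd (List.cons.inj hq).2.symm r.support_ne_nil
  | cons h p ih =>
    intro q hq
    cases q with
    | nil =>
      rw [Walk.support_nil, Walk.support_cons] at hq
      exact absurd (List.cons.inj hq).2 p.support_ne_nil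
    | cons h' r =>
      simp only [Walk.support_cons, List.cons.injEq, true_and] at hq
      have hx : _ = _ := congrArg List.head? hq
      rw [p.support_eq_cons, r.support_eq_cons] at hx
      simp only [List.head?_cons, Option.some.injEq] at hx
      subst hx
      rw [ih r hq]

lemma split_unique {V : Type*} [DecidableEq V] {x : V} {A B A' B' : List V} (h : A ++ x :: B = A' ++ x :: B')
    (hA : x ∉ A) (hA' : x ∉ A') : A = A' ∧ B = B' := by
  induction A generalizing A' with
  | nil =>
    cases A' with
    | nil => simpa using h
    | cons a' A2 =>
      simp only [List.nil_append, List.cons_append, List.cons.injEq] at h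
      exact absurd (h.1 ▸ List.mem_cons_self) hA'
  | cons a A2 ih =>
    cases A' with
    | nil =>
      simp only [List.cons_append, List.nil_append, List.cons.injEq] at h
      exact absurd (h.1 ▸ List.mem_cons_self) hA
    | cons a' A2' =>
      simp only [List.cons_append, List.cons.injEq] at h
      obtain ⟨rfl, h2⟩ := h
      obtain ⟨h3, h4⟩ := ih h2 (fun hx => hA (List.mem_cons_of_mem _ hx))
        (fun hx => hA' (List.mem_cons_of_mem _ hx))
      exact ⟨by rw [h3], h4⟩

lemma pair_sublist_antisymm {V : Type*} {x y : V} {L : List V} (hL : L.Nodup)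
    (h1 : [x, y] <+ L) (h2 : [y, x] <+ L) : x = y := by
  induction L with
  | nil => simp at h1
  | cons z L ih =>
    rw [List.nodup_cons] at hL
    cases h1 with
    | cons _ h1' =>
      cases h2 with
      | cons _ h2' => exact ih hL.2 h1' h2'
      | cons_cons h2' =>
        exact absurd (h1'.subset (by simp)) hL.1
    | cons_cons h1' =>
      cases h2 with
      | cons _ h2' => exact absurd (h2'.subset (by simp)) hL.1
      | cons_cons h2' => rfl

lemma exists_shortcut {V : Type*} [DecidableEq V] {G : SimpleGraph V} [Fintype V] [DecidableRel G.Adj] {s t a b c : V}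
    (hbs : b ≠ s) (hbt : b ≠ t)
    (hNb : G.neighborFinset b = {a, c}) (hac : G.Adj a c)
    (p : G.Walk s t) (hp : p.IsPath) (hb : b ∈ p.support) :
    ∃ (x y : V) (A B : List V) (sc : G.Walk s t), sc.IsPath ∧
      p.support = A ++ x :: b :: y :: B ∧ sc.support = A ++ x :: y :: B ∧
      ((x = a ∧ y = c) ∨ (x = c ∧ y = a)) := by
  classical
  set q := p.takeUntil b hb with hq
  set r := p.dropUntil b hb with hr
  have hqr : q.append r = p := p.take_spec hb
  obtain ⟨x, hbx, w₁, hw1⟩ := Walk.exists_eq_cons_of_ne hbs q.reverse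
  obtain ⟨y, hby, r₁, hw2⟩ := Walk.exists_eq_cons_of_ne hbt r
  have hqsupp : q.support = w₁.support.reverse ++ [b] := by
    have : q.support.reverse = b :: w₁.support := by
      rw [← Walk.support_reverse, hw1, Walk.support_cons]
    rw [← List.reverse_reverse q.support, this]
    simp
  have hw₁supp : w₁.support = x :: w₁.support.tail := w₁.support_eq_cons
  have hr₁supp : r₁.support = y :: r₁.support.tail := r₁.support_eq_cons
  set A : List V := w₁.support.tail.reverse with hA
  set B : List V := r₁.support.tail with hB
  have hAx : w₁.support.reverse = A ++ [x] := by rw [hw₁supp]; simp [hA]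
  have hpsupp : p.support = A ++ x :: b :: y :: B := by
    rw [← hqr, Walk.support_append, hqsupp, hw2, Walk.support_cons, hr₁supp, hAx]
    simp
  have hnd : (A ++ x :: b :: y :: B).Nodup := by
    rw [← hpsupp]; exact hp.support_nodup
  have hxy : x ≠ y := by
    have h2 := hnd.of_append_right
    simp only [List.nodup_cons, List.mem_cons] at h2
    intro h; exact h2.1 (Or.inr (Or.inl h))
  have hmem : ∀ z, G.Adj b z → z = a ∨ z = c := by
    intro z hz
    have : z ∈ G.neighborFinset b := (G.mem_neighborFinset b z).mpr hz
    rw [hNb] at this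
    simpa using this
  have hdisj : (x = a ∧ y = c) ∨ (x = c ∧ y = a) := by
    rcases hmem x hbx with rfl | rfl <;> rcases hmem y hby with rfl | rfl
    · exact absurd rfl hxy
    · exact Or.inl ⟨rfl, rfl⟩
    · exact Or.inr ⟨rfl, rfl⟩
    · exact absurd rfl hxy
  have haxy : G.Adj x y := by
    rcases hdisj with ⟨rfl, rfl⟩ | ⟨rfl, rfl⟩
    · exact hac
    · exact hac.symm
  refine ⟨x, y, A, B, w₁.reverse.append (Walk.cons haxy r₁), ?_, hpsupp, ?_, hdisj⟩
  · rw [Walk.isPath_def, Walk.support_append, Walk.support_reverse, hAx,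
      Walk.support_cons, hr₁supp]
    · have hsub : (A ++ x :: y :: B) <+ (A ++ x :: b :: y :: B) := by
        apply List.Sublist.append_left
        exact (List.Sublist.cons₂ x (List.Sublist.cons b (List.Sublist.refl _)))
      have := hnd.sublist hsub
      simpa using this
  · rw [Walk.support_append, Walk.support_reverse, hAx, Walk.support_cons, hr₁supp]
    simp

lemma exists_lift {V : Type*} [DecidableEq V] {G : SimpleGraph V} {b : V} :
    ∀ {u v : V} (p : G.Walk u v), (∀ x ∈ p.support, x ≠ b) →
    ∀ (hu : u ≠ b) (hv : v ≠ b),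
    ∃ w : (G.induce {v : V | v ≠ b}).Walk ⟨u, hu⟩ ⟨v, hv⟩,
      w.map (SimpleGraph.Embedding.induce {v : V | v ≠ b}).toHom = p := by
  intro u v p
  induction p with
  | nil => exact fun _ hu hv => ⟨Walk.nil, rfl⟩
  | @cons u m v had q ih =>
    intro h hu hv
    have hm : m ≠ b := h m (by simp)
    obtain ⟨w, hw⟩ := ih (fun x hx => h x (by simp [hx])) hm hv
    refine ⟨Walk.cons (by simpa using had) w, ?_⟩
    rw [Walk.map_cons, hw]
    rfl

lemma filter_map_val {V : Type*} [DecidableEq V] {b : V} (Tb : Finset V) (T' : Finset {v : V | v ≠ b})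
    (hTb : ∀ v : {v : V | v ≠ b}, ↑v ∈ Tb ↔ v ∈ T')
    (l : List {v : V | v ≠ b}) :
    (l.map Subtype.val).filter (· ∈ Tb) = (l.filter (· ∈ T')).map Subtype.val := by
  rw [List.filter_map]
  congr 1
  apply List.filter_congr
  intro v _
  simp only [Function.comp_apply, decide_eq_decide]
  exact hTb v

lemma tracking_of_tracking_up {V : Type*} [DecidableEq V] {G : SimpleGraph V} {s t b : V} (hbs : b ≠ s) (hbt : b ≠ t)
    (T : Finset V) (hT : IsTrackingSet G s t T)
    (T' : Finset {v : V | v ≠ b})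
    (hTT' : ∀ v : {v : V | v ≠ b}, v ∈ T' ↔ ↑v ∈ T) :
    IsTrackingSet (G.induce {v : V | v ≠ b}) ⟨s, Ne.symm hbs⟩ ⟨t, Ne.symm hbt⟩ T' := by
  intro p' q' hfil
  set emb := SimpleGraph.Embedding.induce (G := G) {v : V | v ≠ b} with hemb
  have key : ∀ r' : (G.induce {v : V | v ≠ b}).Path ⟨s, Ne.symm hbs⟩ ⟨t, Ne.symm hbt⟩,
      ((SimpleGraph.Path.map emb.toHom emb.injective r').1.support.filter (· ∈ T)) =
        (r'.1.support.filter (· ∈ T')).map Subtype.val := by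
    intro r'
    have h1 : (SimpleGraph.Path.map emb.toHom emb.injective r').1.support
        = r'.1.support.map Subtype.val := by
      simp [SimpleGraph.Path.map, Walk.support_map]; rfl
    rw [h1, filter_map_val T T' (fun v => (hTT' v).symm)]
  have := hT (SimpleGraph.Path.map emb.toHom emb.injective p')
    (SimpleGraph.Path.map emb.toHom emb.injective q') (by have h := (key p').trans ((congrArg (List.map Subtype.val) hfil).trans (key q').symm); exact h)
  exact SimpleGraph.Path.map_injective emb.injective _ _ this

lemma b_mem_tracking {V : Type*} [DecidableEq V] {G : SimpleGraph V} [Fintype V] [DecidableRel G.Adj] {s t a b c : V}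
    (hbs : b ≠ s) (hbt : b ≠ t)
    (hNb : G.neighborFinset b = {a, c}) (hac : G.Adj a c)
    (hpartV : ∀ v : V, ∃ p : G.Path s t, v ∈ p.1.support)
    (T : Finset V) (hT : IsTrackingSet G s t T) : b ∈ T := by
  by_contra hbT
  obtain ⟨p, hbp⟩ := hpartV b
  obtain ⟨x, y, A, B, sc, hscp, hps, hscs, -⟩ :=
    exists_shortcut hbs hbt hNb hac p.1 p.2 hbp
  have hpq : p = ⟨sc, hscp⟩ := by
    apply hT
    rw [hps, hscs]
    simp [List.filter_append, List.filter_cons, hbT]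
  have hlen : p.1.support.length = sc.support.length := by rw [hpq]
  rw [hps, hscs] at hlen
  simp at hlen

lemma tracking_union_b {V : Type*} [DecidableEq V] {G : SimpleGraph V} [Fintype V] [DecidableRel G.Adj] {s t a b c : V}
    (hbs : b ≠ s) (hbt : b ≠ t)
    (hNb : G.neighborFinset b = {a, c}) (hac : G.Adj a c)
    (T' : Finset {v : V | v ≠ b})
    (hT' : IsTrackingSet (G.induce {v : V | v ≠ b}) ⟨s, Ne.symm hbs⟩
      ⟨t, Ne.symm hbt⟩ T')
    (Tb : Finset V) (hTb : ∀ v : {v : V | v ≠ b}, ↑v ∈ Tb ↔ v ∈ T')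
    (hbTb : b ∈ Tb) :
    IsTrackingSet G s t Tb := by
  set emb := SimpleGraph.Embedding.induce (G := G) {v : V | v ≠ b} with hemb
  -- lifting a b-free walk to a G'-path
  have lift_walk : ∀ (w : G.Walk s t) (hw : w.IsPath) (hbw : b ∉ w.support),
      ∃ w' : (G.induce {v : V | v ≠ b}).Path ⟨s, Ne.symm hbs⟩ ⟨t, Ne.symm hbt⟩,
        Walk.map emb.toHom w'.1 = w ∧
        w.support.filter (· ∈ Tb) =
          (w'.1.support.filter (· ∈ T')).map Subtype.val := by
    intro w hw hbw
    obtain ⟨w', hw'⟩ := exists_lift w (fun x hx hxb => hbw (by rw [← hxb]; exact hx))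
      (Ne.symm hbs) (Ne.symm hbt)
    have hw'path : w'.IsPath := by
      apply Walk.IsPath.of_map (f := emb.toHom)
      rw [hw']; exact hw
    refine ⟨⟨w', hw'path⟩, hw', ?_⟩
    have hsupp : w.support = w'.support.map Subtype.val := by
      subst hw'; exact Walk.support_map _ _
    rw [hsupp, filter_map_val Tb T' hTb]
  intro p q hfil
  by_cases hbp : b ∈ p.1.support <;> by_cases hbq : b ∈ q.1.support
  · -- both pass through b
    obtain ⟨x₁, y₁, A₁, B₁, sc₁, hsc₁, hps₁, hscs₁, hd₁⟩ :=
      exists_shortcut hbs hbt hNb hac p.1 p.2 hbp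
    obtain ⟨x₂, y₂, A₂, B₂, sc₂, hsc₂, hps₂, hscs₂, hd₂⟩ :=
      exists_shortcut hbs hbt hNb hac q.1 q.2 hbq
    have hnd₁ : (A₁ ++ x₁ :: b :: y₁ :: B₁).Nodup := hps₁ ▸ p.2.support_nodup
    have hnd₂ : (A₂ ++ x₂ :: b :: y₂ :: B₂).Nodup := hps₂ ▸ q.2.support_nodup
    rw [List.nodup_append] at hnd₁ hnd₂
    have hbA₁ : b ∉ A₁ := fun h => hnd₁.2.2 b h b (by simp) rfl
    have hbA₂ : b ∉ A₂ := fun h => hnd₂.2.2 b h b (by simp) rfl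
    have hbx₁ : b ≠ x₁ := by
      have := hnd₁.2.1; simp only [List.nodup_cons, List.mem_cons] at this
      intro h; exact this.1 (Or.inl h.symm)
    have hbx₂ : b ≠ x₂ := by
      have := hnd₂.2.1; simp only [List.nodup_cons, List.mem_cons] at this
      intro h; exact this.1 (Or.inl h.symm)
    have hbyB₁ : b ∉ y₁ :: B₁ := by
      have h := hnd₁.2.1; rw [List.nodup_cons, List.nodup_cons] at h; exact h.2.1
    have hbyB₂ : b ∉ y₂ :: B₂ := by
      have h := hnd₂.2.1; rw [List.nodup_cons, List.nodup_cons] at h; exact h.2.1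
    obtain ⟨C₁, hC₁⟩ : ∃ C, C = A₁ ++ [x₁] := ⟨_, rfl⟩
    obtain ⟨C₂, hC₂⟩ : ∃ C, C = A₂ ++ [x₂] := ⟨_, rfl⟩
    have hps₁' : p.1.support = C₁ ++ b :: y₁ :: B₁ := by rw [hps₁, hC₁]; simp
    have hps₂' : q.1.support = C₂ ++ b :: y₂ :: B₂ := by rw [hps₂, hC₂]; simp
    have hscs₁' : sc₁.support = C₁ ++ y₁ :: B₁ := by rw [hscs₁, hC₁]; simp
    have hscs₂' : sc₂.support = C₂ ++ y₂ :: B₂ := by rw [hscs₂, hC₂]; simp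
    have hbC₁ : b ∉ C₁ := by
      rw [hC₁]; simp only [List.mem_append, List.mem_singleton]
      rintro (h | h); exacts [hbA₁ h, hbx₁ h]
    have hbC₂ : b ∉ C₂ := by
      rw [hC₂]; simp only [List.mem_append, List.mem_singleton]
      rintro (h | h); exacts [hbA₂ h, hbx₂ h]
    have e₁ : p.1.support.filter (· ∈ Tb)
        = (C₁.filter (· ∈ Tb)) ++ b :: ((y₁ :: B₁).filter (· ∈ Tb)) := by
      rw [hps₁', List.filter_append, List.filter_cons]
      simp [hbTb]
    have e₂ : q.1.support.filter (· ∈ Tb)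
        = (C₂.filter (· ∈ Tb)) ++ b :: ((y₂ :: B₂).filter (· ∈ Tb)) := by
      rw [hps₂', List.filter_append, List.filter_cons]
      simp [hbTb]
    rw [e₁, e₂] at hfil
    obtain ⟨hL, hR⟩ := split_unique hfil
      (fun h => hbC₁ (List.mem_of_mem_filter h))
      (fun h => hbC₂ (List.mem_of_mem_filter h))
    have hscfil : sc₁.support.filter (· ∈ Tb) = sc₂.support.filter (· ∈ Tb) := by
      rw [hscs₁', hscs₂', List.filter_append, List.filter_append, hL, hR]
    have hbsc₁ : b ∉ sc₁.support := by
      rw [hscs₁']; simp only [List.mem_append]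
      rintro (h | h); exacts [hbC₁ h, hbyB₁ h]
    have hbsc₂ : b ∉ sc₂.support := by
      rw [hscs₂']; simp only [List.mem_append]
      rintro (h | h); exacts [hbC₂ h, hbyB₂ h]
    obtain ⟨P₁, hmap₁, hfil₁⟩ := lift_walk sc₁ hsc₁ hbsc₁
    obtain ⟨P₂, hmap₂, hfil₂⟩ := lift_walk sc₂ hsc₂ hbsc₂
    have hinj := List.map_injective_iff.mpr
      (Subtype.val_injective (p := (· ∈ {v : V | v ≠ b})))
    have hPeq : P₁ = P₂ := hT' P₁ P₂ (hinj (by rw [← hfil₁, ← hfil₂, hscfil]))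
    have hsceq : sc₁ = sc₂ := by rw [← hmap₁, ← hmap₂, hPeq]
    have hsupp_eq : A₁ ++ x₁ :: y₁ :: B₁ = A₂ ++ x₂ :: y₂ :: B₂ := by
      rw [← hscs₁, ← hscs₂, hsceq]
    have hndL : (A₁ ++ x₁ :: y₁ :: B₁).Nodup := hscs₁ ▸ hsc₁.support_nodup
    by_cases hxx : x₁ = x₂
    · subst hxx
      have hx₁A₁ : x₁ ∉ A₁ := fun h => (List.nodup_append.mp hndL).2.2 x₁ h x₁ (by simp) rfl
      have hx₁A₂ : x₁ ∉ A₂ := by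
        have hndL2 : (A₂ ++ x₁ :: y₂ :: B₂).Nodup := hsupp_eq ▸ hndL
        exact fun h => (List.nodup_append.mp hndL2).2.2 x₁ h x₁ (by simp) rfl
      obtain ⟨hAeq, hrest⟩ := split_unique hsupp_eq hx₁A₁ hx₁A₂
      have hsupp : p.1.support = q.1.support := by
        rw [hps₁, hps₂, hAeq, hrest]
      exact Subtype.ext (walk_support_inj p.1 q.1 hsupp)
    · exfalso
      have hyx : y₁ = x₂ ∧ y₂ = x₁ := by
        rcases hd₁ with ⟨h1, h2⟩ | ⟨h1, h2⟩ <;> rcases hd₂ with ⟨h3, h4⟩ | ⟨h3, h4⟩ <;>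
          first
          | (exact absurd (h1.trans h3.symm) hxx)
          | (exact ⟨h2.trans h3.symm, h4.trans h1.symm⟩)
      have s1 : [x₁, y₁] <+ (A₁ ++ x₁ :: y₁ :: B₁) :=
        ((List.nil_sublist B₁).cons₂ y₁ |>.cons₂ x₁).trans
          (List.sublist_append_right A₁ _)
      have s2 : [y₁, x₁] <+ (A₁ ++ x₁ :: y₁ :: B₁) := by
        have hpair : [y₁, x₁] = [x₂, y₂] := by rw [hyx.1, hyx.2]
        rw [hpair, hsupp_eq]
        exact ((List.nil_sublist B₂).cons₂ y₂ |>.cons₂ x₂).trans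
          (List.sublist_append_right A₂ _)
      have hxy1 : x₁ = y₁ := pair_sublist_antisymm hndL s1 s2
      rcases hd₁ with ⟨h1, h2⟩ | ⟨h1, h2⟩
      · exact hac.ne (h1 ▸ h2 ▸ hxy1)
      · exact hac.ne (h2 ▸ h1 ▸ hxy1).symm
  · -- mixed
    exfalso
    have h1 : b ∈ p.1.support.filter (· ∈ Tb) := List.mem_filter.mpr ⟨hbp, by simpa using hbTb⟩
    rw [hfil] at h1
    exact hbq (List.mem_of_mem_filter h1)
  · exfalso
    have h1 : b ∈ q.1.support.filter (· ∈ Tb) := List.mem_filter.mpr ⟨hbq, by simpa using hbTb⟩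
    rw [← hfil] at h1
    exact hbp (List.mem_of_mem_filter h1)
  · -- neither passes through b
    obtain ⟨p', hp'map, hp'fil⟩ := lift_walk p.1 p.2 hbp
    obtain ⟨q', hq'map, hq'fil⟩ := lift_walk q.1 q.2 hbq
    rw [hp'fil, hq'fil] at hfil
    have hinj := List.map_injective_iff.mpr (Subtype.val_injective (p := (· ∈ {v : V | v ≠ b})))
    have := hT' p' q' (hinj hfil)
    have : p'.1 = q'.1 := by rw [this]
    apply Subtype.ext
    rw [← hp'map, ← hq'map, this]

end TriangleRuleAux

open scoped Classical in
/-- triangle rule. If `b ∉ {s, t}` has `N(b) = {a, c}` with `a`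
and `c` adjacent, then `G` has a tracking set of size at most `k` iff `G - b`
has one of size at most `k - 1`; moreover for every tracking set `T` of `G`
of minimum size among those containing `b`, the set `T \ {b}` is a tracking
set of `G - b`. -/
theorem triangle_rule {V : Type*} [Fintype V] [DecidableEq V]
    (G : SimpleGraph V) [DecidableRel G.Adj] (s t a b c : V) (k : ℕ)
    (hk : 1 ≤ k) (hbs : b ≠ s) (hbt : b ≠ t)
    (hNb : G.neighborFinset b = {a, c}) (hac : G.Adj a c)
    (hpartV : ∀ v : V, ∃ p : G.Path s t, v ∈ p.1.support)
    (hpartE : ∀ e ∈ G.edgeSet, ∃ p : G.Path s t, e ∈ p.1.edges) :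
    ((∃ T : Finset V, IsTrackingSet G s t T ∧ T.card ≤ k) ↔
      (∃ T' : Finset {v : V | v ≠ b},
        IsTrackingSet (G.induce {v : V | v ≠ b}) ⟨s, Ne.symm hbs⟩
          ⟨t, Ne.symm hbt⟩ T' ∧ T'.card ≤ k - 1)) ∧
    (∀ T : Finset V, IsTrackingSet G s t T → b ∈ T →
      (∀ T'' : Finset V, IsTrackingSet G s t T'' → b ∈ T'' →
        T.card ≤ T''.card) →
      IsTrackingSet (G.induce {v : V | v ≠ b}) ⟨s, Ne.symm hbs⟩
        ⟨t, Ne.symm hbt⟩ ((T.erase b).subtype (· ∈ {v : V | v ≠ b}))) := by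
  constructor
  · constructor
    · rintro ⟨T, hT, hTk⟩
      have hbT : b ∈ T := b_mem_tracking hbs hbt hNb hac hpartV T hT
      refine ⟨(T.erase b).subtype (· ∈ {v : V | v ≠ b}), ?_, ?_⟩
      · apply tracking_of_tracking_up hbs hbt T hT
        intro v
        rw [Finset.mem_subtype, Finset.mem_erase]
        exact ⟨And.right, fun h => ⟨v.2, h⟩⟩
      · rw [Finset.card_subtype]
        have heq : (T.erase b).filter (· ∈ {v : V | v ≠ b}) = T.erase b :=
          Finset.filter_true_of_mem (fun x hx => (Finset.mem_erase.mp hx).1)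
        rw [heq, Finset.card_erase_of_mem hbT]
        omega
    · rintro ⟨T', hT', hT'k⟩
      refine ⟨insert b (T'.map ⟨Subtype.val, Subtype.val_injective⟩), ?_, ?_⟩
      · apply tracking_union_b hbs hbt hNb hac T' hT'
        · intro v
          have hv : (v : V) ≠ b := v.2
          have hv' : (⟨Subtype.val, Subtype.val_injective⟩ :
              {v : V | v ≠ b} ↪ V) v = ↑v := rfl
          rw [Finset.mem_insert, ← hv', Finset.mem_map']
          simp [hv]
        · exact Finset.mem_insert_self b _
      · have h1 := Finset.card_insert_le b (T'.map ⟨Subtype.val, Subtype.val_injective⟩)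
        rw [Finset.card_map] at h1
        omega
  · intro T hT hbT _
    apply tracking_of_tracking_up hbs hbt T hT
    intro v
    rw [Finset.mem_subtype, Finset.mem_erase]
    exact ⟨And.right, fun h => ⟨v.2, h⟩⟩
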